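/- arXiv:2402.10465 — 2 statements merged into one kernel-verified Lean document; each statement's English description precedes it below -/
import Mathlib

section
/- Let L, M, N ⊆ [m] with |L| + |M| + |N| ≥ 1, and let C = C(Δ_L, Δ_M, Δ_N). Then C is a minimal code; moreover, if |L| + |M| + |N| ≥ 3, then C is self-orthogonal. -/
open Finset Polynomial
open scoped Classical

/-- `V m` is the vector space `F₂^m`. -/
abbrev V (m : ℕ) := Fin m → ZMod 2

/-- Dot product `x·y = Σ_i x_i y_i` in `F₂`. -/
def dot {m : ℕ} (x y : V m) : ZMod 2 := ∑ i, x i * y i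

/-- `Supp v = {i : v i ≠ 0}`. -/
def supp {m : ℕ} (v : V m) : Finset (Fin m) := Finset.univ.filter fun i => v i ≠ 0

/-- The simplicial complex `Δ_L = {v : Supp v ⊆ L}` generated by `L`. -/
def Δ {m : ℕ} (L : Finset (Fin m)) : Finset (V m) := Finset.univ.filter fun v => supp v ⊆ L

/-- Hamming weight of a vector. -/
def wtv {ι : Type} [Fintype ι] (c : ι → ZMod 2) : ℕ :=
  (Finset.univ.filter fun i => c i ≠ 0).card

/-- The linear functional `x ↦ x·y`. -/
noncomputable def dotL {m : ℕ} (y : V m) : V m →ₗ[ZMod 2] ZMod 2 :=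
  ∑ i, LinearMap.smulRight (LinearMap.proj i) (y i)

/-- The linear map `(α,β,γ) ↦ ((d₁,d₂,d₃) ↦ α·d₁ + (β+γ)·d₂ + β·d₃)` whose range is the
binary code `C(D₁,D₂,D₃)`. -/
noncomputable def codeMap {m : ℕ} (D₁ D₂ D₃ : Finset (V m)) :
    (V m × V m × V m) →ₗ[ZMod 2]
      (({x // x ∈ D₁} × {x // x ∈ D₂} × {x // x ∈ D₃}) → ZMod 2) :=
  LinearMap.pi fun d =>
    (dotL d.1.1).comp (LinearMap.fst (ZMod 2) (V m) (V m × V m))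
    + (dotL d.2.1.1).comp
        (((LinearMap.fst (ZMod 2) (V m) (V m)).comp (LinearMap.snd (ZMod 2) (V m) (V m × V m)))
          + ((LinearMap.snd (ZMod 2) (V m) (V m)).comp (LinearMap.snd (ZMod 2) (V m) (V m × V m))))
    + (dotL d.2.2.1).comp
        ((LinearMap.fst (ZMod 2) (V m) (V m)).comp (LinearMap.snd (ZMod 2) (V m) (V m × V m)))

lemma codeMap_apply {m : ℕ} (D₁ D₂ D₃ : Finset (V m)) (α β γ : V m)
    (d : {x // x ∈ D₁} × {x // x ∈ D₂} × {x // x ∈ D₃}) :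
    codeMap D₁ D₂ D₃ (α, β, γ) d = dot α d.1.1 + dot (β + γ) d.2.1.1 + dot β d.2.2.1 := by
  simp [codeMap, dotL, dot, LinearMap.smulRight, mul_comm]

lemma dot_add_right' {m : ℕ} (x a b : V m) : dot x (a + b) = dot x a + dot x b := by
  simp [dot, mul_add, Finset.sum_add_distrib]

lemma zero_mem_Δ {m : ℕ} (L : Finset (Fin m)) : (0 : V m) ∈ Δ L := by
  simp [Δ, supp]

lemma add_mem_Δ {m : ℕ} {L : Finset (Fin m)} {a b : V m}
    (ha : a ∈ Δ L) (hb : b ∈ Δ L) : a + b ∈ Δ L := by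
  simp only [Δ, Finset.mem_filter, Finset.mem_univ, true_and] at *
  intro i hi
  simp only [supp, Finset.mem_filter, Finset.mem_univ, true_and, Pi.add_apply] at hi
  by_cases h : a i = 0
  · refine hb ?_
    simp only [supp, Finset.mem_filter, Finset.mem_univ, true_and]
    intro h'
    exact hi (by rw [h, h', add_zero])
  · exact ha (by simp [supp, h])

lemma card_Δ {m : ℕ} (L : Finset (Fin m)) : (Δ L).card = 2 ^ L.card := by
  have : (Δ L).card = (Finset.univ : Finset ({i // i ∈ L} → ZMod 2)).card := by
    apply Finset.card_nbij' (fun v => fun i => v i.1)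
      (fun f => fun i => if h : i ∈ L then f ⟨i, h⟩ else 0)
    · intro a _; exact Finset.mem_univ _
    · intro f _
      simp only [Δ, Finset.mem_coe, Finset.mem_filter, Finset.mem_univ, true_and]
      intro i hi
      simp only [supp, Finset.mem_filter, Finset.mem_univ, true_and] at hi
      by_contra h
      exact hi (by simp [h])
    · intro v hv
      funext i
      by_cases h : i ∈ L
      · simp [h]
      · simp only [Δ, Finset.mem_coe, Finset.mem_filter, Finset.mem_univ, true_and] at hv
        have hvi : v i = 0 := by
          by_contra h'
          exact h (hv (by simp [supp, h']))
        simp [h, hvi]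
    · intro f _
      funext i
      simp [i.2]
  rw [this, Finset.card_univ, Fintype.card_fun]
  simp


abbrev DT {m : ℕ} (L M N : Finset (Fin m)) : Type :=
  {x // x ∈ Δ L} × {x // x ∈ Δ M} × {x // x ∈ Δ N}

def addT {m : ℕ} {L M N : Finset (Fin m)} (d e : DT L M N) : DT L M N :=
  (⟨d.1.1 + e.1.1, add_mem_Δ d.1.2 e.1.2⟩,
   ⟨d.2.1.1 + e.2.1.1, add_mem_Δ d.2.1.2 e.2.1.2⟩,
   ⟨d.2.2.1 + e.2.2.1, add_mem_Δ d.2.2.2 e.2.2.2⟩)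

lemma addT_addT {m : ℕ} {L M N : Finset (Fin m)} (d e : DT L M N) :
    addT (addT d e) e = d := by
  have h : ∀ x y : ZMod 2, x + y + y = x := by decide
  refine Prod.ext (Subtype.ext ?_) (Prod.ext (Subtype.ext ?_) (Subtype.ext ?_)) <;>
    · funext i
      exact h _ _

lemma code_addT {m : ℕ} {L M N : Finset (Fin m)} (p : V m × V m × V m) (d e : DT L M N) :
    codeMap (Δ L) (Δ M) (Δ N) p (addT d e)
      = codeMap (Δ L) (Δ M) (Δ N) p d + codeMap (Δ L) (Δ M) (Δ N) p e := by
  obtain ⟨α, β, γ⟩ := p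
  simp only [codeMap_apply, addT, dot_add_right']
  ring

lemma weight_eq_half {m : ℕ} {L M N : Finset (Fin m)} {p : V m × V m × V m}
    (h : codeMap (Δ L) (Δ M) (Δ N) p ≠ 0) :
    2 * (Finset.univ.filter fun d : DT L M N => codeMap (Δ L) (Δ M) (Δ N) p d ≠ 0).card
      = Fintype.card (DT L M N) := by
  set c := codeMap (Δ L) (Δ M) (Δ N) p with hc
  have hadd : ∀ d e : DT L M N, c (addT d e) = c d + c e := fun d e => code_addT p d e
  obtain ⟨d₀, hd₀⟩ : ∃ d, c d ≠ 0 := Function.ne_iff.mp h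
  have hone : ∀ a : ZMod 2, a ≠ 0 → a = 1 := by decide
  have hxx : ∀ x : ZMod 2, x + x = 0 := by decide
  have key : (Finset.univ.filter fun d : DT L M N => c d ≠ 0).card
      = (Finset.univ.filter fun d : DT L M N => ¬ (c d ≠ 0)).card := by
    apply Finset.card_nbij' (fun d => addT d d₀) (fun d => addT d d₀)
    · intro a ha
      simp only [Finset.mem_coe, Finset.mem_filter, Finset.mem_univ, true_and, not_not] at *
      rw [hadd, hone _ ha, hone _ hd₀]
      decide
    · intro a ha
      simp only [Finset.mem_coe, Finset.mem_filter, Finset.mem_univ, true_and, not_not] at *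
      rw [hadd, ha, hone _ hd₀]
      decide
    · intro a _; exact addT_addT a d₀
    · intro a _; exact addT_addT a d₀
  have := Finset.card_filter_add_card_filter_not
    (s := (Finset.univ : Finset (DT L M N))) (p := fun d => c d ≠ 0)
  rw [Finset.card_univ] at this
  omega

/-- A binary linear code (given as a set of codewords) is minimal if the support of a nonzero
codeword never strictly contains the support of another nonzero codeword. -/
def IsMinimalCode {ι : Type} (C : Set (ι → ZMod 2)) : Prop :=
  ∀ u ∈ C, u ≠ 0 → ∀ v ∈ C, v ≠ 0 → Function.support v ⊆ Function.support u → v = u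

/-- A binary code is self-orthogonal if any two codewords are orthogonal. -/
def IsSelfOrthogonal {ι : Type} [Fintype ι] (C : Set (ι → ZMod 2)) : Prop :=
  ∀ c ∈ C, ∀ c' ∈ C, ∑ i, c i * c' i = 0

/-- Theorem 4.2, row 1: `C(Δ_L, Δ_M, Δ_N)` is always minimal, and it is
self-orthogonal whenever `|L|+|M|+|N| ≥ 3`. -/
theorem stmt14 (m : ℕ) (hm : 1 ≤ m) (L M N : Finset (Fin m))
    (hs : 1 ≤ L.card + M.card + N.card) :
    IsMinimalCode (SetLike.coe (LinearMap.range (codeMap (Δ L) (Δ M) (Δ N)))) ∧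
    (3 ≤ L.card + M.card + N.card →
      IsSelfOrthogonal (SetLike.coe (LinearMap.range (codeMap (Δ L) (Δ M) (Δ N))))) := by
  constructor
  · intro u hu hu0 v hv hv0 hsupp
    rw [SetLike.mem_coe, LinearMap.mem_range] at hu hv
    obtain ⟨p, rfl⟩ := hu
    obtain ⟨q, rfl⟩ := hv
    have wu := weight_eq_half (p := p) hu0
    have wv := weight_eq_half (p := q) hv0
    have hsub : (Finset.univ.filter fun d : DT L M N => codeMap (Δ L) (Δ M) (Δ N) q d ≠ 0)
        ⊆ (Finset.univ.filter fun d : DT L M N => codeMap (Δ L) (Δ M) (Δ N) p d ≠ 0) := by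
      intro d hd
      simp only [Finset.mem_filter, Finset.mem_univ, true_and] at *
      exact hsupp hd
    have heq : (Finset.univ.filter fun d : DT L M N => codeMap (Δ L) (Δ M) (Δ N) q d ≠ 0)
        = (Finset.univ.filter fun d : DT L M N => codeMap (Δ L) (Δ M) (Δ N) p d ≠ 0) :=
      Finset.eq_of_subset_of_card_le hsub (by omega)
    funext d
    have hiff : ∀ a b : ZMod 2, (a ≠ 0 ↔ b ≠ 0) → a = b := by decide
    apply hiff
    constructor
    · intro h
      have : d ∈ (Finset.univ.filter fun d : DT L M N =>
          codeMap (Δ L) (Δ M) (Δ N) q d ≠ 0) := by simp [h]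
      rw [heq] at this
      simpa using this
    · intro h
      have : d ∈ (Finset.univ.filter fun d : DT L M N =>
          codeMap (Δ L) (Δ M) (Δ N) p d ≠ 0) := by simp [h]
      rw [← heq] at this
      simpa using this
  · intro h3 c hc c' hc'
    rw [SetLike.mem_coe, LinearMap.mem_range] at hc hc'
    obtain ⟨p, rfl⟩ := hc
    obtain ⟨q, rfl⟩ := hc'
    set c := codeMap (Δ L) (Δ M) (Δ N) p with hcdef
    set c' := codeMap (Δ L) (Δ M) (Δ N) q with hcdef'
    have hadd : ∀ d e : DT L M N, c (addT d e) = c d + c e := fun d e => code_addT p d e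
    have hadd' : ∀ d e : DT L M N, c' (addT d e) = c' d + c' e := fun d e => code_addT q d e
    have hxx : ∀ x y : ZMod 2, x + y = 0 → x = y := by decide
    set K := Finset.univ.filter fun d : DT L M N => (c d, c' d) = ((0 : ZMod 2), (0 : ZMod 2))
      with hKdef
    have hfib : ∀ b : ZMod 2 × ZMod 2,
        (Finset.univ.filter fun d : DT L M N => (c d, c' d) = b).card ≤ K.card := by
      intro b
      rcases (Finset.univ.filter fun d : DT L M N => (c d, c' d) = b).eq_empty_or_nonempty
        with he | ⟨e, he⟩
      · simp [he]
      · simp only [Finset.mem_filter, Finset.mem_univ, true_and] at he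
        have hsum0 : ∀ x : ZMod 2, x + x = 0 := by decide
        apply Finset.card_le_card_of_injOn (fun d => addT d e)
        · intro a ha
          simp only [Finset.mem_coe, Finset.mem_filter, Finset.mem_univ, true_and] at ha
          rw [hKdef]
          simp only [Finset.mem_coe, Finset.mem_filter, Finset.mem_univ, true_and, Prod.mk.injEq]
          have hpair := ha.trans he.symm
          rw [Prod.mk.injEq] at hpair
          obtain ⟨h1, h2⟩ := hpair
          constructor
          · rw [hadd, h1]
            exact hsum0 _
          · rw [hadd', h2]
            exact hsum0 _
        · intro a _ a' _ hEq
          have := congrArg (fun x => addT x e) hEq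
          simpa only [addT_addT] using this
    have htot : Fintype.card (DT L M N)
        = ∑ b : ZMod 2 × ZMod 2,
            (Finset.univ.filter fun d : DT L M N => (c d, c' d) = b).card := by
      rw [← Finset.card_univ]
      exact Finset.card_eq_sum_card_fiberwise (fun x _ => Finset.mem_univ _)
    have hcardDT : Fintype.card (DT L M N) = 2 ^ (L.card + M.card + N.card) := by
      simp only [DT, Fintype.card_prod, Fintype.card_coe, card_Δ]
      ring
    have h8 : 8 ≤ Fintype.card (DT L M N) := by
      rw [hcardDT]
      calc (8 : ℕ) = 2 ^ 3 := by norm_num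
      _ ≤ 2 ^ (L.card + M.card + N.card) := Nat.pow_le_pow_right (by norm_num) h3
    have hsum : ∑ b : ZMod 2 × ZMod 2,
        (Finset.univ.filter fun d : DT L M N => (c d, c' d) = b).card ≤ 4 * K.card := by
      calc ∑ b : ZMod 2 × ZMod 2,
          (Finset.univ.filter fun d : DT L M N => (c d, c' d) = b).card
          ≤ ∑ _b : ZMod 2 × ZMod 2, K.card := Finset.sum_le_sum fun b _ => hfib b
        _ = 4 * K.card := by
            rw [Finset.sum_const, Finset.card_univ]
            norm_num
    have hK2 : 1 < K.card := by omega
    obtain ⟨a, ha, b, hb, hab⟩ := Finset.one_lt_card.mp hK2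
    rw [hKdef] at ha hb
    simp only [Finset.mem_filter, Finset.mem_univ, true_and, Prod.mk.injEq] at ha hb
    set k := addT a b with hkdef
    have hck : c k = 0 := by rw [hkdef, hadd, ha.1, hb.1, add_zero]
    have hck' : c' k = 0 := by rw [hkdef, hadd', ha.2, hb.2, add_zero]
    have hfree : ∀ d : DT L M N, addT d k ≠ d := by
      intro d hd
      apply hab
      have h1 : d.1.1 + k.1.1 = d.1.1 := congrArg (fun x => x.1.1) hd
      have h2 : d.2.1.1 + k.2.1.1 = d.2.1.1 := congrArg (fun x => x.2.1.1) hd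
      have h3 : d.2.2.1 + k.2.2.1 = d.2.2.1 := congrArg (fun x => x.2.2.1) hd
      have e1 : a.1.1 + b.1.1 = 0 := add_eq_left.mp h1
      have e2 : a.2.1.1 + b.2.1.1 = 0 := add_eq_left.mp h2
      have e3 : a.2.2.1 + b.2.2.1 = 0 := add_eq_left.mp h3
      refine Prod.ext (Subtype.ext ?_) (Prod.ext (Subtype.ext ?_) (Subtype.ext ?_)) <;>
        · funext i
          first
          | exact hxx _ _ (congrFun e1 i)
          | exact hxx _ _ (congrFun e2 i)
          | exact hxx _ _ (congrFun e3 i)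
    apply Finset.sum_ninvolution (fun d => addT d k)
    · intro d
      rw [hadd, hadd', hck, hck', add_zero, add_zero]
      have : ∀ x : ZMod 2, x + x = 0 := by decide
      exact this _
    · intro d _
      exact hfree d
    · intro d
      exact Finset.mem_univ _
    · intro d
      exact addT_addT d k
end

section
/- Let L, M, N ⊆ [m] with s := |L| + |M| + |N| satisfying 1 ≤ s, and let C′ be the image of the F_2-linear map (F_2^m)³ → F_2^{E} sending (α,β,γ) to the vector whose coordinate at (d₁,d₂,d₃) ∈ E is α·d₁ + (β+γ)·d₂ + β·d₃, where E = (F_2^m × F_2^m × F_2^m) \ (Δ_L × Δ_M × Δ_N). If s ≤ 3m − 2, then C′ is a minimal code; moreover, if s ≥ 3, then C′ is self-orthogonal. -/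
open Finset Polynomial
open scoped Classical

/-- The linear map `(α,β,γ) ↦ ((d₁,d₂,d₃) ↦ α·d₁ + (β+γ)·d₂ + β·d₃)` on an arbitrary
index set `E ⊆ F₂^m × F₂^m × F₂^m` of coordinates. -/
noncomputable def codeMapE {m : ℕ} (E : Finset (V m × V m × V m)) :
    (V m × V m × V m) →ₗ[ZMod 2] ({x // x ∈ E} → ZMod 2) :=
  LinearMap.pi fun d =>
    (dotL d.1.1).comp (LinearMap.fst (ZMod 2) (V m) (V m × V m))
    + (dotL d.1.2.1).comp
        (((LinearMap.fst (ZMod 2) (V m) (V m)).comp (LinearMap.snd (ZMod 2) (V m) (V m × V m)))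
          + ((LinearMap.snd (ZMod 2) (V m) (V m)).comp (LinearMap.snd (ZMod 2) (V m) (V m × V m))))
    + (dotL d.1.2.2).comp
        ((LinearMap.fst (ZMod 2) (V m) (V m)).comp (LinearMap.snd (ZMod 2) (V m) (V m × V m)))

/- ### Auxiliary development -/

set_option linter.unusedSectionVars false

section Stmt18Aux

variable {ι : Type} [Fintype ι] [DecidableEq ι]

/-- inner product of two vectors in `F₂^ι`. -/
def ipAux (w x : ι → ZMod 2) : ZMod 2 := ∑ i, w i * x i

lemma ipAux_zero_left (x : ι → ZMod 2) : ipAux (0 : ι → ZMod 2) x = 0 := by simp [ipAux]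

/-- the standard basis vector -/
def eVAux (i : ι) : ι → ZMod 2 := Pi.single i 1

lemma eVAux_apply (i j : ι) : eVAux i j = if j = i then 1 else 0 := by
  simp [eVAux, Pi.single_apply]

lemma ipAux_add_single (w x : ι → ZMod 2) (i : ι) :
    ipAux w (x + eVAux i) = ipAux w x + w i := by
  simp [ipAux, eVAux_apply, mul_add, Finset.sum_add_distrib, mul_ite]

lemma add_eVAux_add_eVAux (x : ι → ZMod 2) (i : ι) :
    x + eVAux i + eVAux i = x := by
  have h : ∀ c : ZMod 2, c + c = 0 := by decide
  funext j
  simp [eVAux_apply, add_assoc, h]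

lemma card_deltaAux (L : Finset ι) :
    (univ.filter fun x : ι → ZMod 2 => ∀ i ∉ L, x i = 0).card = 2 ^ L.card := by
  have h : (univ.filter fun x : ι → ZMod 2 => ∀ i ∉ L, x i = 0).card
      = (univ : Finset (↥L → ZMod 2)).card := by
    apply Finset.card_nbij' (fun v => fun l : ↥L => v l.1)
      (fun w => fun k => if h : k ∈ L then w ⟨k, h⟩ else 0)
    · intro a _; simp
    · intro w _
      simp only [Finset.mem_coe, Finset.mem_filter, Finset.mem_univ, true_and]
      intro i hi; simp [dif_neg hi]
    · intro v hv
      simp only [Finset.mem_coe, Finset.mem_filter, Finset.mem_univ, true_and] at hv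
      funext k
      by_cases h : k ∈ L
      · simp [dif_pos h]
      · simp [dif_neg h, hv k h]
    · intro w _
      funext l
      simp [dif_pos l.2]
  rw [h]
  simp [Fintype.card_fun]

lemma eVAux_mem_delta {L : Finset ι} {i : ι} (hi : i ∈ L) (x : ι → ZMod 2)
    (hx : ∀ j ∉ L, x j = 0) : ∀ j ∉ L, (x + eVAux i) j = 0 := by
  intro j hj
  have hji : j ≠ i := fun h => hj (h ▸ hi)
  simp [hx j hj, eVAux_apply, hji]

lemma zmod_flip : ∀ c a : ZMod 2, c + a + a = c := by decide

lemma card_flip1 (L : Finset ι) (w : ι → ZMod 2) {i : ι} (hi : i ∈ L) (a : ZMod 2) :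
    (univ.filter fun x : ι → ZMod 2 => (∀ j ∉ L, x j = 0) ∧ ipAux w x = a).card
      = (univ.filter fun x : ι → ZMod 2 => (∀ j ∉ L, x j = 0) ∧ ipAux w x = a + w i).card := by
  apply Finset.card_nbij' (fun x => x + eVAux i) (fun x => x + eVAux i)
  · intro x hx
    simp only [Finset.mem_coe, Finset.mem_filter, Finset.mem_univ, true_and] at hx ⊢
    exact ⟨eVAux_mem_delta hi x hx.1, by rw [ipAux_add_single, hx.2]⟩
  · intro x hx
    simp only [Finset.mem_coe, Finset.mem_filter, Finset.mem_univ, true_and] at hx ⊢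
    exact ⟨eVAux_mem_delta hi x hx.1, by rw [ipAux_add_single, hx.2, zmod_flip]⟩
  · intro x _; exact add_eVAux_add_eVAux x i
  · intro x _; exact add_eVAux_add_eVAux x i

lemma card_flip2 (L : Finset ι) (w w' : ι → ZMod 2) {i : ι} (hi : i ∈ L) (a b : ZMod 2) :
    (univ.filter fun x : ι → ZMod 2 => (∀ j ∉ L, x j = 0) ∧ ipAux w x = a ∧ ipAux w' x = b).card
      = (univ.filter fun x : ι → ZMod 2 =>
          (∀ j ∉ L, x j = 0) ∧ ipAux w x = a + w i ∧ ipAux w' x = b + w' i).card := by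
  apply Finset.card_nbij' (fun x => x + eVAux i) (fun x => x + eVAux i)
  · intro x hx
    simp only [Finset.mem_coe, Finset.mem_filter, Finset.mem_univ, true_and] at hx ⊢
    exact ⟨eVAux_mem_delta hi x hx.1, by rw [ipAux_add_single, hx.2.1],
      by rw [ipAux_add_single, hx.2.2]⟩
  · intro x hx
    simp only [Finset.mem_coe, Finset.mem_filter, Finset.mem_univ, true_and] at hx ⊢
    exact ⟨eVAux_mem_delta hi x hx.1, by rw [ipAux_add_single, hx.2.1, zmod_flip],
      by rw [ipAux_add_single, hx.2.2, zmod_flip]⟩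
  · intro x _; exact add_eVAux_add_eVAux x i
  · intro x _; exact add_eVAux_add_eVAux x i

lemma zmod_ne_iff : ∀ c a : ZMod 2, (¬ c = a) ↔ c = a + 1 := by decide

lemma P1Aux (L : Finset ι) (w : ι → ZMod 2) (hw : ∃ i ∈ L, w i ≠ 0) (a : ZMod 2) :
    2 * (univ.filter fun x : ι → ZMod 2 => (∀ j ∉ L, x j = 0) ∧ ipAux w x = a).card
      = 2 ^ L.card := by
  obtain ⟨i, hiL, hwi⟩ := hw
  have hw1 : w i = 1 := by
    have h : ∀ c : ZMod 2, c ≠ 0 → c = 1 := by decide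
    exact h _ hwi
  have hflip := card_flip1 L w hiL a
  rw [hw1] at hflip
  have hpart :
      ((univ.filter fun x : ι → ZMod 2 => ∀ j ∉ L, x j = 0).filter fun x => ipAux w x = a).card
        + ((univ.filter fun x : ι → ZMod 2 => ∀ j ∉ L, x j = 0).filter
            fun x => ¬ ipAux w x = a).card
      = (univ.filter fun x : ι → ZMod 2 => ∀ j ∉ L, x j = 0).card :=
    Finset.card_filter_add_card_filter_not _
  rw [Finset.filter_filter, Finset.filter_filter] at hpart
  have hneg : (univ.filter fun x : ι → ZMod 2 => (∀ j ∉ L, x j = 0) ∧ ¬ ipAux w x = a)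
      = univ.filter fun x : ι → ZMod 2 => (∀ j ∉ L, x j = 0) ∧ ipAux w x = a + 1 := by
    apply Finset.filter_congr
    intro x _
    rw [zmod_ne_iff]
  rw [hneg] at hpart
  rw [← card_deltaAux L, ← hpart, ← hflip]
  ring

lemma zmod_pair_cases : ∀ c c' : ZMod 2, c ≠ c' → (c = 1 ∧ c' = 0) ∨ (c = 0 ∧ c' = 1) := by decide

lemma P2Aux (L : Finset ι) (w w' : ι → ZMod 2) (hne : ∃ i ∈ L, w i ≠ w' i)
    (hw : ∃ i ∈ L, w i ≠ 0) (hw' : ∃ i ∈ L, w' i ≠ 0) (a b : ZMod 2) :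
    4 * (univ.filter fun x : ι → ZMod 2 =>
        (∀ j ∉ L, x j = 0) ∧ ipAux w x = a ∧ ipAux w' x = b).card = 2 ^ L.card := by
  obtain ⟨i, hiL, hii⟩ := hne
  rcases zmod_pair_cases _ _ hii with ⟨h1, h2⟩ | ⟨h1, h2⟩
  · have hflip := card_flip2 L w w' hiL a b
    rw [h1, h2, add_zero] at hflip
    have hpart :
        ((univ.filter fun x : ι → ZMod 2 => (∀ j ∉ L, x j = 0) ∧ ipAux w' x = b).filter
            fun x => ipAux w x = a).card
          + ((univ.filter fun x : ι → ZMod 2 => (∀ j ∉ L, x j = 0) ∧ ipAux w' x = b).filter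
            fun x => ¬ ipAux w x = a).card
        = (univ.filter fun x : ι → ZMod 2 => (∀ j ∉ L, x j = 0) ∧ ipAux w' x = b).card :=
      Finset.card_filter_add_card_filter_not _
    rw [Finset.filter_filter, Finset.filter_filter] at hpart
    have e1 : (univ.filter fun x : ι → ZMod 2 =>
          ((∀ j ∉ L, x j = 0) ∧ ipAux w' x = b) ∧ ipAux w x = a)
        = univ.filter fun x : ι → ZMod 2 =>
          (∀ j ∉ L, x j = 0) ∧ ipAux w x = a ∧ ipAux w' x = b := by
      apply Finset.filter_congr; intro x _; tauto
    have e2 : (univ.filter fun x : ι → ZMod 2 =>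
          ((∀ j ∉ L, x j = 0) ∧ ipAux w' x = b) ∧ ¬ ipAux w x = a)
        = univ.filter fun x : ι → ZMod 2 =>
          (∀ j ∉ L, x j = 0) ∧ ipAux w x = a + 1 ∧ ipAux w' x = b := by
      apply Finset.filter_congr; intro x _
      rw [zmod_ne_iff]; tauto
    rw [e1, e2, ← hflip] at hpart
    have hp := P1Aux L w' hw' b
    linarith
  · have hflip := card_flip2 L w w' hiL a b
    rw [h1, h2, add_zero] at hflip
    have hpart :
        ((univ.filter fun x : ι → ZMod 2 => (∀ j ∉ L, x j = 0) ∧ ipAux w x = a).filter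
            fun x => ipAux w' x = b).card
          + ((univ.filter fun x : ι → ZMod 2 => (∀ j ∉ L, x j = 0) ∧ ipAux w x = a).filter
            fun x => ¬ ipAux w' x = b).card
        = (univ.filter fun x : ι → ZMod 2 => (∀ j ∉ L, x j = 0) ∧ ipAux w x = a).card :=
      Finset.card_filter_add_card_filter_not _
    rw [Finset.filter_filter, Finset.filter_filter] at hpart
    have e1 : (univ.filter fun x : ι → ZMod 2 =>
          ((∀ j ∉ L, x j = 0) ∧ ipAux w x = a) ∧ ipAux w' x = b)
        = univ.filter fun x : ι → ZMod 2 =>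
          (∀ j ∉ L, x j = 0) ∧ ipAux w x = a ∧ ipAux w' x = b := by
      apply Finset.filter_congr; intro x _; tauto
    have e2 : (univ.filter fun x : ι → ZMod 2 =>
          ((∀ j ∉ L, x j = 0) ∧ ipAux w x = a) ∧ ¬ ipAux w' x = b)
        = univ.filter fun x : ι → ZMod 2 =>
          (∀ j ∉ L, x j = 0) ∧ ipAux w x = a ∧ ipAux w' x = b + 1 := by
      apply Finset.filter_congr; intro x _
      rw [zmod_ne_iff]; tauto
    rw [e1, e2, ← hflip] at hpart
    have hp := P1Aux L w hw a
    linarith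

lemma cast_zero_of_two_mul {k n : ℕ} (h : 2 * k = 2 ^ n) (hn : 2 ≤ n) : (k : ZMod 2) = 0 := by
  obtain ⟨t, rfl⟩ : ∃ t, n = 2 + t := ⟨n - 2, by omega⟩
  have e : (2 : ℕ) ^ (2 + t) = 2 * (2 * 2 ^ t) := by rw [pow_add]; ring
  have hk : k = 2 * 2 ^ t := by omega
  have h2 : ((2 : ℕ) : ZMod 2) = 0 := by decide
  rw [hk, Nat.cast_mul, h2, zero_mul]

lemma cast_zero_of_four_mul {k n : ℕ} (h : 4 * k = 2 ^ n) (hn : 3 ≤ n) : (k : ZMod 2) = 0 := by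
  obtain ⟨t, rfl⟩ : ∃ t, n = 3 + t := ⟨n - 3, by omega⟩
  have e : (2 : ℕ) ^ (3 + t) = 4 * (2 * 2 ^ t) := by rw [pow_add]; ring
  have hk : k = 2 * 2 ^ t := by omega
  have h2 : ((2 : ℕ) : ZMod 2) = 0 := by decide
  rw [hk, Nat.cast_mul, h2, zero_mul]

end Stmt18Aux

/- ### Transport between `(F₂^m)³` and `F₂^{Idx m}` -/

abbrev Idx3 (m : ℕ) : Type := Fin m ⊕ (Fin m ⊕ Fin m)

def σ3 {m : ℕ} (d : V m × V m × V m) : Idx3 m → ZMod 2 :=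
  Sum.elim d.1 (Sum.elim d.2.1 d.2.2)

def τ3 {m : ℕ} (x : Idx3 m → ZMod 2) : V m × V m × V m :=
  (fun i => x (.inl i), fun i => x (.inr (.inl i)), fun i => x (.inr (.inr i)))

lemma σ3_τ3 {m : ℕ} (x : Idx3 m → ZMod 2) : σ3 (τ3 x) = x := by
  funext i
  rcases i with i | i | i <;> rfl

lemma τ3_σ3 {m : ℕ} (d : V m × V m × V m) : τ3 (σ3 d) = d := rfl

def wvec {m : ℕ} (a b c : V m) : Idx3 m → ZMod 2 := Sum.elim a (Sum.elim b c)

lemma ip_wvec {m : ℕ} (a b c : V m) (d : V m × V m × V m) :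
    ipAux (wvec a b c) (σ3 d) = dot a d.1 + dot b d.2.1 + dot c d.2.2 := by
  simp [ipAux, wvec, σ3, dot, Fintype.sum_sum_type, add_assoc]

lemma mem_delta_iff {m : ℕ} (L : Finset (Fin m)) (v : V m) :
    v ∈ Δ L ↔ ∀ i ∉ L, v i = 0 := by
  simp only [Δ, supp, Finset.mem_filter, Finset.mem_univ, true_and, Finset.subset_iff]
  constructor
  · intro h i hi
    by_contra hv
    exact hi (h hv)
  · intro h i hi
    by_contra hL
    exact hi (h i hL)

lemma mem_box_iff {m : ℕ} (L M N : Finset (Fin m)) (d : V m × V m × V m) :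
    d ∈ Δ L ×ˢ Δ M ×ˢ Δ N ↔ ∀ i ∉ L.disjSum (M.disjSum N), σ3 d i = 0 := by
  obtain ⟨d1, d2, d3⟩ := d
  simp only [Finset.mem_product, mem_delta_iff, σ3, Sum.forall, Finset.inl_mem_disjSum,
    Finset.inr_mem_disjSum, Sum.elim_inl, Sum.elim_inr]

lemma card_transport {m : ℕ} (Q : (Idx3 m → ZMod 2) → Prop) [DecidablePred Q] :
    (univ.filter fun d : V m × V m × V m => Q (σ3 d)).card = (univ.filter Q).card := by
  apply Finset.card_nbij' σ3 τ3
  · intro d hd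
    simp only [Finset.mem_coe, Finset.mem_filter, Finset.mem_univ, true_and] at hd ⊢
    exact hd
  · intro x hx
    simp only [Finset.mem_coe, Finset.mem_filter, Finset.mem_univ, true_and] at hx ⊢
    rw [σ3_τ3]; exact hx
  · intro d _; exact τ3_σ3 d
  · intro x _; exact σ3_τ3 x

lemma card_Idx3 (m : ℕ) : Fintype.card (Idx3 m) = 3 * m := by
  simp [Fintype.card_sum]; ring

lemma sum_mul_eq_card {α : Type} (s : Finset α) (f g : α → ZMod 2) :
    ∑ d ∈ s, f d * g d = ((s.filter fun d => f d = 1 ∧ g d = 1).card : ZMod 2) := by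
  have hcc : ∀ c c' : ZMod 2, c * c' = if (c = 1 ∧ c' = 1) then (1 : ZMod 2) else 0 := by decide
  rw [Finset.card_filter]
  push_cast
  exact Finset.sum_congr rfl fun d _ => by rw [hcc]

lemma codeMapE_apply {m : ℕ} (E : Finset (V m × V m × V m)) (α β γ : V m)
    (d : {x // x ∈ E}) :
    codeMapE E (α, β, γ) d = dot α d.1.1 + dot (β + γ) d.1.2.1 + dot β d.1.2.2 := by
  simp [codeMapE, dotL, dot, LinearMap.smulRight, mul_comm]

lemma codeMapE_eq_ip {m : ℕ} (E : Finset (V m × V m × V m)) (α β γ : V m)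
    (d : {x // x ∈ E}) :
    codeMapE E (α, β, γ) d = ipAux (wvec α (β + γ) β) (σ3 d.1) := by
  rw [codeMapE_apply, ip_wvec]

/-- Theorem 4.2, row 9: for `E = (F₂^m)³ \ (Δ_L × Δ_M × Δ_N)` and
`s = |L|+|M|+|N| ≥ 1`, the corresponding code is minimal whenever `s ≤ 3m − 2` and
self-orthogonal whenever `s ≥ 3`. -/
theorem stmt18 (m : ℕ) (hm : 1 ≤ m) (L M N : Finset (Fin m))
    (hs : 1 ≤ L.card + M.card + N.card) :
    (L.card + M.card + N.card + 2 ≤ 3 * m →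
      IsMinimalCode (SetLike.coe (LinearMap.range (codeMapE (Δ L ×ˢ Δ M ×ˢ Δ N)ᶜ)))) ∧
    (3 ≤ L.card + M.card + N.card →
      IsSelfOrthogonal (SetLike.coe (LinearMap.range (codeMapE (Δ L ×ˢ Δ M ×ˢ Δ N)ᶜ)))) := by
  set box : Finset (V m × V m × V m) := Δ L ×ˢ Δ M ×ˢ Δ N with hbox_def
  set LL : Finset (Idx3 m) := L.disjSum (M.disjSum N) with hLL_def
  have hLLcard : LL.card = L.card + M.card + N.card := by
    rw [hLL_def, Finset.card_disjSum, Finset.card_disjSum]; ring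
  have hboxmem : ∀ d : V m × V m × V m, d ∈ box ↔ ∀ i ∉ LL, σ3 d i = 0 := fun d =>
    mem_box_iff L M N d
  have hboxcard : box.card = 2 ^ (L.card + M.card + N.card) := by
    have h1 : box = univ.filter fun d : V m × V m × V m =>
        (fun x : Idx3 m → ZMod 2 => ∀ i ∉ LL, x i = 0) (σ3 d) := by
      ext d
      simp only [Finset.mem_filter, Finset.mem_univ, true_and]
      exact hboxmem d
    rw [h1, card_transport (fun x : Idx3 m → ZMod 2 => ∀ i ∉ LL, x i = 0),
      card_deltaAux, hLLcard]
  have hucard : (univ : Finset (Idx3 m)).card = 3 * m := by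
    rw [Finset.card_univ, card_Idx3]
  have h2m : 2 ≤ 3 * m := by omega
  have h3m : 3 ≤ 3 * m := by omega
  -- non-vanishing of coefficient vectors from non-vanishing of codewords
  have key_ne : ∀ (w : Idx3 m → ZMod 2), w ≠ 0 → ∃ i ∈ (univ : Finset (Idx3 m)), w i ≠ 0 := by
    intro w hw
    obtain ⟨i, hi⟩ := Function.ne_iff.1 hw
    exact ⟨i, Finset.mem_univ i, hi⟩
  constructor
  · -- minimality
    intro hcard u hu hu0 v hv hv0 hsub
    rw [SetLike.mem_coe, LinearMap.mem_range] at hu hv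
    obtain ⟨⟨α, β, γ⟩, rfl⟩ := hu
    obtain ⟨⟨α', β', γ'⟩, rfl⟩ := hv
    set w : Idx3 m → ZMod 2 := wvec α (β + γ) β with hw_def
    set w' : Idx3 m → ZMod 2 := wvec α' (β' + γ') β' with hw'_def
    have hu_eq : ∀ d : {x // x ∈ boxᶜ}, codeMapE boxᶜ (α, β, γ) d = ipAux w (σ3 d.1) :=
      fun d => codeMapE_eq_ip _ _ _ _ _
    have hv_eq : ∀ d : {x // x ∈ boxᶜ}, codeMapE boxᶜ (α', β', γ') d = ipAux w' (σ3 d.1) :=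
      fun d => codeMapE_eq_ip _ _ _ _ _
    by_cases hww : w' = w
    · funext d
      rw [hu_eq d, hv_eq d, hww]
    · exfalso
      have hw0 : w ≠ 0 := by
        intro h
        apply hu0
        funext d
        rw [hu_eq d, h, ipAux_zero_left]
        rfl
      have hw'0 : w' ≠ 0 := by
        intro h
        apply hv0
        funext d
        rw [hv_eq d, h, ipAux_zero_left]
        rfl
      have hne : ∃ i ∈ (univ : Finset (Idx3 m)), w' i ≠ w i := by
        obtain ⟨i, hi⟩ := Function.ne_iff.1 hww
        exact ⟨i, Finset.mem_univ i, hi⟩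
      have hp2 := P2Aux (univ : Finset (Idx3 m)) w' w hne (key_ne w' hw'0) (key_ne w hw0) 1 0
      rw [hucard] at hp2
      have htriv : (univ.filter fun x : Idx3 m → ZMod 2 =>
            (∀ j ∉ (univ : Finset (Idx3 m)), x j = 0) ∧ ipAux w' x = 1 ∧ ipAux w x = 0)
          = univ.filter fun x : Idx3 m → ZMod 2 => ipAux w' x = 1 ∧ ipAux w x = 0 := by
        apply Finset.filter_congr
        intro x _
        simp
      rw [htriv] at hp2
      set S' : Finset (V m × V m × V m) :=
        univ.filter fun d => ipAux w' (σ3 d) = 1 ∧ ipAux w (σ3 d) = 0 with hS'_def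
      have hS'card : 4 * S'.card = 2 ^ (3 * m) := by
        rw [hS'_def, card_transport (fun x => ipAux w' x = 1 ∧ ipAux w x = 0)]
        exact hp2
      have hS'sub : S' ⊆ box.erase 0 := by
        intro d hd
        rw [hS'_def, Finset.mem_filter] at hd
        obtain ⟨-, hd1, hd2⟩ := hd
        have hdbox : d ∈ box := by
          by_contra hdE
          have hdE' : d ∈ boxᶜ := Finset.mem_compl.2 hdE
          have hvd : codeMapE boxᶜ (α', β', γ') ⟨d, hdE'⟩ ≠ 0 := by
            rw [hv_eq ⟨d, hdE'⟩]
            rw [hd1]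
            decide
          have hud := hsub hvd
          rw [Function.mem_support, hu_eq ⟨d, hdE'⟩, hd2] at hud
          exact hud rfl
        refine Finset.mem_erase.2 ⟨?_, hdbox⟩
        intro h0
        rw [h0] at hd1
        have : ipAux w' (σ3 (0 : V m × V m × V m)) = 0 := by
          have hz : σ3 (0 : V m × V m × V m) = 0 := by
            funext i; rcases i with i | i | i <;> rfl
          rw [hz]
          simp [ipAux]
        rw [this] at hd1
        exact absurd hd1 (by decide)
      have h0box : (0 : V m × V m × V m) ∈ box := by
        rw [hboxmem]
        intro i _
        rcases i with i | i | i <;> rfl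
      have hle : S'.card ≤ box.card - 1 := by
        calc S'.card ≤ (box.erase 0).card := Finset.card_le_card hS'sub
        _ = box.card - 1 := Finset.card_erase_of_mem h0box
      -- arithmetic contradiction
      obtain ⟨t, ht, hst⟩ : ∃ t, 3 * m = 2 + t ∧ L.card + M.card + N.card ≤ t :=
        ⟨3 * m - 2, by omega, by omega⟩
      have hpow : (2 : ℕ) ^ (L.card + M.card + N.card) ≤ 2 ^ t :=
        Nat.pow_le_pow_right (by norm_num) hst
      have he : (2 : ℕ) ^ (2 + t) = 4 * 2 ^ t := by rw [pow_add]; ring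
      rw [ht, he] at hS'card
      have hS'val : S'.card = 2 ^ t := Nat.eq_of_mul_eq_mul_left (by norm_num) hS'card
      have hle' : (2 : ℕ) ^ t ≤ 2 ^ (L.card + M.card + N.card) - 1 := by
        rw [← hS'val, ← hboxcard]; exact hle
      have hfalse : (2 : ℕ) ^ (L.card + M.card + N.card)
          ≤ 2 ^ (L.card + M.card + N.card) - 1 := le_trans hpow hle'
      exact absurd hfalse (not_le.2 (Nat.sub_lt (by positivity) one_pos))
  · -- self-orthogonality
    intro hs3 c hc c' hc'
    have hs2 : 2 ≤ L.card + M.card + N.card := by omega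
    rw [SetLike.mem_coe, LinearMap.mem_range] at hc hc'
    obtain ⟨⟨α, β, γ⟩, rfl⟩ := hc
    obtain ⟨⟨α', β', γ'⟩, rfl⟩ := hc'
    set w : Idx3 m → ZMod 2 := wvec α (β + γ) β with hw_def
    set w' : Idx3 m → ZMod 2 := wvec α' (β' + γ') β' with hw'_def
    set F : V m × V m × V m → ZMod 2 := fun d => ipAux w (σ3 d) * ipAux w' (σ3 d) with hF_def
    have hstep1 : ∑ i : {x // x ∈ boxᶜ},
        codeMapE boxᶜ (α, β, γ) i * codeMapE boxᶜ (α', β', γ') i = ∑ d ∈ boxᶜ, F d := by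
      rw [← Finset.sum_coe_sort boxᶜ F]
      apply Finset.sum_congr rfl
      intro d _
      rw [codeMapE_eq_ip, codeMapE_eq_ip]
    rw [hstep1]
    -- the two partial sums
    have hsum_univ : ∑ d ∈ (univ : Finset (V m × V m × V m)), F d = 0 := by
      rw [hF_def]
      rw [sum_mul_eq_card]
      rw [card_transport (fun x => ipAux w x = 1 ∧ ipAux w' x = 1)]
      by_cases hw0 : w = 0
      · have : (univ.filter fun x : Idx3 m → ZMod 2 => ipAux w x = 1 ∧ ipAux w' x = 1) = ∅ := by
          rw [Finset.filter_eq_empty_iff]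
          intro x _
          rw [hw0, ipAux_zero_left]
          rintro ⟨h1, -⟩
          exact absurd h1 (by decide)
        rw [this]
        simp
      by_cases hw'0 : w' = 0
      · have : (univ.filter fun x : Idx3 m → ZMod 2 => ipAux w x = 1 ∧ ipAux w' x = 1) = ∅ := by
          rw [Finset.filter_eq_empty_iff]
          intro x _
          rw [hw'0, ipAux_zero_left]
          rintro ⟨-, h2⟩
          exact absurd h2 (by decide)
        rw [this]
        simp
      have htriv : (univ.filter fun x : Idx3 m → ZMod 2 => ipAux w x = 1 ∧ ipAux w' x = 1)
          = univ.filter fun x : Idx3 m → ZMod 2 =>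
            (∀ j ∉ (univ : Finset (Idx3 m)), x j = 0) ∧ ipAux w x = 1 ∧ ipAux w' x = 1 := by
        apply Finset.filter_congr
        intro x _
        simp
      rw [htriv]
      by_cases hww : w = w'
      · have heq : (univ.filter fun x : Idx3 m → ZMod 2 =>
              (∀ j ∉ (univ : Finset (Idx3 m)), x j = 0) ∧ ipAux w x = 1 ∧ ipAux w' x = 1)
            = univ.filter fun x : Idx3 m → ZMod 2 =>
              (∀ j ∉ (univ : Finset (Idx3 m)), x j = 0) ∧ ipAux w x = 1 := by
          apply Finset.filter_congr
          intro x _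
          rw [← hww]
          tauto
        rw [heq]
        have hp := P1Aux (univ : Finset (Idx3 m)) w (key_ne w hw0) 1
        rw [hucard] at hp
        exact cast_zero_of_two_mul hp h2m
      · have hne : ∃ i ∈ (univ : Finset (Idx3 m)), w i ≠ w' i := by
          obtain ⟨i, hi⟩ := Function.ne_iff.1 hww
          exact ⟨i, Finset.mem_univ i, hi⟩
        have hp := P2Aux (univ : Finset (Idx3 m)) w w' hne (key_ne w hw0) (key_ne w' hw'0) 1 1
        rw [hucard] at hp
        exact cast_zero_of_four_mul hp h3m
    have hsum_box : ∑ d ∈ box, F d = 0 := by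
      rw [hF_def, sum_mul_eq_card]
      have hfilter : (box.filter fun d => ipAux w (σ3 d) = 1 ∧ ipAux w' (σ3 d) = 1)
          = univ.filter fun d : V m × V m × V m =>
              (fun x : Idx3 m → ZMod 2 =>
                (∀ i ∉ LL, x i = 0) ∧ ipAux w x = 1 ∧ ipAux w' x = 1) (σ3 d) := by
        ext d
        simp only [Finset.mem_filter, Finset.mem_univ, true_and]
        rw [hboxmem d]
      rw [hfilter, card_transport
        (fun x : Idx3 m → ZMod 2 => (∀ i ∉ LL, x i = 0) ∧ ipAux w x = 1 ∧ ipAux w' x = 1)]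
      -- now a case analysis on the restrictions of w, w' to LL
      by_cases hz : ∀ i ∈ LL, w i = 0
      · have : (univ.filter fun x : Idx3 m → ZMod 2 =>
            (∀ i ∉ LL, x i = 0) ∧ ipAux w x = 1 ∧ ipAux w' x = 1) = ∅ := by
          rw [Finset.filter_eq_empty_iff]
          rintro x - ⟨hΔ, h1, -⟩
          have h0 : ipAux w x = 0 := by
            rw [ipAux]
            apply Finset.sum_eq_zero
            intro i _
            by_cases hiL : i ∈ LL
            · rw [hz i hiL, zero_mul]
            · rw [hΔ i hiL, mul_zero]
          rw [h0] at h1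
          exact absurd h1 (by decide)
        rw [this]
        simp
      by_cases hz' : ∀ i ∈ LL, w' i = 0
      · have : (univ.filter fun x : Idx3 m → ZMod 2 =>
            (∀ i ∉ LL, x i = 0) ∧ ipAux w x = 1 ∧ ipAux w' x = 1) = ∅ := by
          rw [Finset.filter_eq_empty_iff]
          rintro x - ⟨hΔ, -, h2⟩
          have h0 : ipAux w' x = 0 := by
            rw [ipAux]
            apply Finset.sum_eq_zero
            intro i _
            by_cases hiL : i ∈ LL
            · rw [hz' i hiL, zero_mul]
            · rw [hΔ i hiL, mul_zero]
          rw [h0] at h2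
          exact absurd h2 (by decide)
        rw [this]
        simp
      push_neg at hz hz'
      by_cases heqr : ∀ i ∈ LL, w i = w' i
      · have hcongr : (univ.filter fun x : Idx3 m → ZMod 2 =>
              (∀ i ∉ LL, x i = 0) ∧ ipAux w x = 1 ∧ ipAux w' x = 1)
            = univ.filter fun x : Idx3 m → ZMod 2 => (∀ i ∉ LL, x i = 0) ∧ ipAux w x = 1 := by
          apply Finset.filter_congr
          intro x _
          constructor
          · rintro ⟨hΔ, h1, -⟩
            exact ⟨hΔ, h1⟩
          · rintro ⟨hΔ, h1⟩
            refine ⟨hΔ, h1, ?_⟩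
            have hipeq : ipAux w' x = ipAux w x := by
              rw [ipAux, ipAux]
              apply Finset.sum_congr rfl
              intro i _
              by_cases hiL : i ∈ LL
              · rw [heqr i hiL]
              · rw [hΔ i hiL, mul_zero, mul_zero]
            rw [hipeq, h1]
        rw [hcongr]
        obtain ⟨i, hiL, hwi⟩ := hz
        have hp := P1Aux LL w ⟨i, hiL, hwi⟩ 1
        rw [hLLcard] at hp
        exact cast_zero_of_two_mul hp hs2
      · push_neg at heqr
        obtain ⟨i, hiL, hwi⟩ := heqr
        have hp := P2Aux LL w w' ⟨i, hiL, hwi⟩ hz hz' 1 1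
        rw [hLLcard] at hp
        exact cast_zero_of_four_mul hp hs3
    have hcompl := Finset.sum_compl_add_sum box F
    rw [hsum_box, add_zero, hsum_univ] at hcompl
    exact hcompl
end
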